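/- For every integer m ≥ 6, every positive integer n, and all integers d₁,…,dₙ with dᵢ ≥ 1 and Σᵢ dᵢ ≥ 5, one has kₘ·c₁³ + bₘ·c₁·c₂ - c₃ ≥ 0, where kₘ = (-28m + m² + 4m³ - m⁴)/((m-4)(m-3)(3m² - 5m - 20)) and bₘ = (-120 + 254m + 3m² - 50m³ + 9m⁴)/(3(m-4)(m-3)(3m² - 5m - 20)); i.e. every Chern-ratio point (c₁³/(c₁c₂), c₃/(c₁c₂)) lies on or above the line y = kₘx + bₘ. -/

import Mathlib

open Finset

/-- `s_j = ∑ i, dᵢ^j`. -/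
def sPow (n : ℕ) (d : Fin n → ℝ) (j : ℕ) : ℝ := ∑ i, (d i) ^ j

/-- `c₁ = 4 - s₁`. -/
def chern1 (n : ℕ) (d : Fin n → ℝ) : ℝ := 4 - sPow n d 1

/-- `c₂ = (s₁² + s₂)/2 - 3(s₁ - 2)`. -/
noncomputable def chern2 (n : ℕ) (d : Fin n → ℝ) : ℝ :=
  (sPow n d 1 ^ 2 + sPow n d 2) / 2 - 3 * (sPow n d 1 - 2)

/-- `c₃ = -(s₁³ + 3s₁s₂ + 2s₃)/6 + (s₁² + s₂) - 3s₁ + 4`. -/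
noncomputable def chern3 (n : ℕ) (d : Fin n → ℝ) : ℝ :=
  -(sPow n d 1 ^ 3 + 3 * sPow n d 1 * sPow n d 2 + 2 * sPow n d 3) / 6
    + (sPow n d 1 ^ 2 + sPow n d 2) - 3 * sPow n d 1 + 4

/-- The slope `kₘ` of the line through `Q(m;1,…,1)` and `Q(m+1;1,…,1)` for `m ≥ 6`. -/
noncomputable def kGen (m : ℕ) : ℝ :=
  (-28 * (m : ℝ) + (m : ℝ) ^ 2 + 4 * (m : ℝ) ^ 3 - (m : ℝ) ^ 4) /
    (((m : ℝ) - 4) * ((m : ℝ) - 3) * (3 * (m : ℝ) ^ 2 - 5 * (m : ℝ) - 20))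

/-- The intercept `bₘ` of the line through `Q(m;1,…,1)` and `Q(m+1;1,…,1)` for `m ≥ 6`. -/
noncomputable def bGen (m : ℕ) : ℝ :=
  (-120 + 254 * (m : ℝ) + 3 * (m : ℝ) ^ 2 - 50 * (m : ℝ) ^ 3 + 9 * (m : ℝ) ^ 4) /
    (3 * ((m : ℝ) - 4) * ((m : ℝ) - 3) * (3 * (m : ℝ) ^ 2 - 5 * (m : ℝ) - 20))

set_option maxHeartbeats 1000000 in
private lemma rq_six (s1 : ℝ) (h8 : 8 ≤ s1) : (0:ℝ) ≤ (4*(348)*((678)*s1^3 + (-10134)*s1^2 + (45636)*s1 + (-55440)) - s1*((-666)*s1 + (4404))^2) := by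
  nlinarith [pow_nonneg (show (0:ℝ) ≤ s1 - 8 by linarith) 2,
    pow_nonneg (show (0:ℝ) ≤ s1 - 8 by linarith) 3]

set_option maxHeartbeats 4000000 in
private lemma rq_seven (m s1 : ℝ) (h7 : 7 ≤ m)
    (ht : (0:ℝ) ≤ (((14)*m^3 + (-75)*m^2 + (7)*m + (300))*s1 - ((18)*m^4 + (-100)*m^3 + (6)*m^2 + (508)*m + (-240)))) :
    (0:ℝ) ≤ (4*((3)*m^4 + (-26)*m^3 + (51)*m^2 + (80)*m + (-240))*(((21)*m^2 + (-3)*m + (-60))*s1^3 + ((-42)*m^3 + (-27)*m^2 + (15)*m + (-180))*s1^2 + ((21)*m^4 + (42)*m^3 + (165)*m^2 + (528)*m + (240))*s1 + ((-12)*m^4 + (-120)*m^3 + (-348)*m^2 + (-240)*m)) - s1*(((-14)*m^3 + (75)*m^2 + (-7)*m + (-300))*s1 + ((15)*m^4 + (-74)*m^3 + (-45)*m^2 + (428)*m))^2) := by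
  have hw : (0:ℝ) ≤ m - 7 := by linarith
  have hp2 := pow_nonneg hw 2
  have hp3 := pow_nonneg hw 3
  have hp4 := pow_nonneg hw 4
  have hp5 := pow_nonneg hw 5
  have hp6 := pow_nonneg hw 6
  have hp7 := pow_nonneg hw 7
  have hp8 := pow_nonneg hw 8
  have hp9 := pow_nonneg hw 9
  have hp10 := pow_nonneg hw 10
  have hp11 := pow_nonneg hw 11
  have hp12 := pow_nonneg hw 12
  have hp13 := pow_nonneg hw 13
  have hp14 := pow_nonneg hw 14
  have hp15 := pow_nonneg hw 15
  have hp16 := pow_nonneg hw 16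
  have hp17 := pow_nonneg hw 17
  have hp18 := pow_nonneg hw 18
  have hG : (0:ℝ) < ((14)*m^3 + (-75)*m^2 + (7)*m + (300)) := by nlinarith [hp2, hp3]
  have hc0 : (0:ℝ) ≤ ((40824)*m^18 + (-1169064)*m^17 + (12536214)*m^16 + (-46440584)*m^15 + (-200106876)*m^14 + (2547244948)*m^13 + (-7584009648)*m^12 + (-10489234652)*m^11 + (113696139732)*m^10 + (-161781323932)*m^9 + (-493962143910)*m^8 + (1606909886420)*m^7 + (269748207600)*m^6 + (-5794974827200)*m^5 + (3613765344000)*m^4 + (9781690752000)*m^3 + (-9976573440000)*m^2 + (-6729246720000)*m + (8410521600000)) := by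
    have e : ((40824)*m^18 + (-1169064)*m^17 + (12536214)*m^16 + (-46440584)*m^15 + (-200106876)*m^14 + (2547244948)*m^13 + (-7584009648)*m^12 + (-10489234652)*m^11 + (113696139732)*m^10 + (-161781323932)*m^9 + (-493962143910)*m^8 + (1606909886420)*m^7 + (269748207600)*m^6 + (-5794974827200)*m^5 + (3613765344000)*m^4 + (9781690752000)*m^3 + (-9976573440000)*m^2 + (-6729246720000)*m + (8410521600000))
        = ((40824)*(m-7)^18 + (3974760)*(m-7)^17 + (179475126)*(m-7)^16 + (4993120600)*(m-7)^15 + (95900460204)*(m-7)^14 + (1350233009044)*(m-7)^13 + (14441612659896)*(m-7)^12 + (119970089405956)*(m-7)^11 + (784650550168044)*(m-7)^10 + (4070131529310164)*(m-7)^9 + (16780723863634482)*(m-7)^8 + (54840992231442836)*(m-7)^7 + (140935926378013008)*(m-7)^6 + (280716421682394944)*(m-7)^5 + (423286989377693952)*(m-7)^4 + (465354466318310400)*(m-7)^3 + (350232488302768128)*(m-7)^2 + (160300346846330880)*(m-7) + (33334991864266752)) := by ring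
    linarith [e, hp2, hp3, hp4, hp5, hp6, hp7, hp8, hp9, hp10, hp11, hp12, hp13, hp14, hp15,
      hp16, hp17, hp18]
  have hc1 : (0:ℝ) ≤ ((17388)*m^14 + (-350412)*m^13 + (2194435)*m^12 + (1385358)*m^11 + (-74202403)*m^10 + (271793496)*m^9 + (164706189)*m^8 + (-2901921834)*m^7 + (3598635479)*m^6 + (10778306160)*m^5 + (-23980890320)*m^4 + (-15585369600)*m^3 + (57297542400)*m^2 + (5958144000)*m + (-51217920000)) := by
    have e : ((17388)*m^14 + (-350412)*m^13 + (2194435)*m^12 + (1385358)*m^11 + (-74202403)*m^10 + (271793496)*m^9 + (164706189)*m^8 + (-2901921834)*m^7 + (3598635479)*m^6 + (10778306160)*m^5 + (-23980890320)*m^4 + (-15585369600)*m^3 + (57297542400)*m^2 + (5958144000)*m + (-51217920000))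
        = ((17388)*(m-7)^14 + (1353612)*(m-7)^13 + (47840035)*(m-7)^12 + (1017369810)*(m-7)^11 + (14544893165)*(m-7)^10 + (147910405848)*(m-7)^9 + (1103705276685)*(m-7)^8 + (6141964957674)*(m-7)^7 + (25627336161383)*(m-7)^6 + (79830043378560)*(m-7)^5 + (182848510718704)*(m-7)^4 + (298762519360512)*(m-7)^3 + (329319192077568)*(m-7)^2 + (219256567013376)*(m-7) + (66529052282880)) := by ring
    linarith [e, hp2, hp3, hp4, hp5, hp6, hp7, hp8, hp9, hp10, hp11, hp12, hp13, hp14]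
  have hc2 : (0:ℝ) ≤ ((1848)*m^10 + (-20872)*m^9 + (14820)*m^8 + (630600)*m^7 + (-2266836)*m^6 + (-2199348)*m^5 + (19063800)*m^4 + (-4944092)*m^3 + (-59970000)*m^2 + (22046400)*m + (75168000)) := by
    have e : ((1848)*m^10 + (-20872)*m^9 + (14820)*m^8 + (630600)*m^7 + (-2266836)*m^6 + (-2199348)*m^5 + (19063800)*m^4 + (-4944092)*m^3 + (-59970000)*m^2 + (22046400)*m + (75168000))
        = ((1848)*(m-7)^10 + (108488)*(m-7)^9 + (2774724)*(m-7)^8 + (40705992)*(m-7)^7 + (379381620)*(m-7)^6 + (2348773500)*(m-7)^5 + (9794077776)*(m-7)^4 + (27202624996)*(m-7)^3 + (48242335632)*(m-7)^2 + (49409562816)*(m-7) + (22226234112)) := by ring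
    linarith [e, hp2, hp3, hp4, hp5, hp6, hp7, hp8, hp9, hp10]
  have hc3 : (0:ℝ) ≤ ((56)*m^6 + (-120)*m^5 + (-1945)*m^4 + (4998)*m^3 + (11591)*m^2 + (-20520)*m + (-32400)) := by
    have e : ((56)*m^6 + (-120)*m^5 + (-1945)*m^4 + (4998)*m^3 + (11591)*m^2 + (-20520)*m + (-32400))
        = ((56)*(m-7)^6 + (2232)*(m-7)^5 + (35015)*(m-7)^4 + (275898)*(m-7)^3 + (1149959)*(m-7)^2 + (2414472)*(m-7) + (2007792)) := by ring
    linarith [e, hp2, hp3, hp4, hp5, hp6]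
  have hkey : ((14)*m^3 + (-75)*m^2 + (7)*m + (300))^3 * (4*((3)*m^4 + (-26)*m^3 + (51)*m^2 + (80)*m + (-240))*(((21)*m^2 + (-3)*m + (-60))*s1^3 + ((-42)*m^3 + (-27)*m^2 + (15)*m + (-180))*s1^2 + ((21)*m^4 + (42)*m^3 + (165)*m^2 + (528)*m + (240))*s1 + ((-12)*m^4 + (-120)*m^3 + (-348)*m^2 + (-240)*m)) - s1*(((-14)*m^3 + (75)*m^2 + (-7)*m + (-300))*s1 + ((15)*m^4 + (-74)*m^3 + (-45)*m^2 + (428)*m))^2)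
      = ((56)*m^6 + (-120)*m^5 + (-1945)*m^4 + (4998)*m^3 + (11591)*m^2 + (-20520)*m + (-32400)) * (((14)*m^3 + (-75)*m^2 + (7)*m + (300))*s1 - ((18)*m^4 + (-100)*m^3 + (6)*m^2 + (508)*m + (-240)))^3 + ((1848)*m^10 + (-20872)*m^9 + (14820)*m^8 + (630600)*m^7 + (-2266836)*m^6 + (-2199348)*m^5 + (19063800)*m^4 + (-4944092)*m^3 + (-59970000)*m^2 + (22046400)*m + (75168000)) * (((14)*m^3 + (-75)*m^2 + (7)*m + (300))*s1 - ((18)*m^4 + (-100)*m^3 + (6)*m^2 + (508)*m + (-240)))^2 + ((17388)*m^14 + (-350412)*m^13 + (2194435)*m^12 + (1385358)*m^11 + (-74202403)*m^10 + (271793496)*m^9 + (164706189)*m^8 + (-2901921834)*m^7 + (3598635479)*m^6 + (10778306160)*m^5 + (-23980890320)*m^4 + (-15585369600)*m^3 + (57297542400)*m^2 + (5958144000)*m + (-51217920000)) * (((14)*m^3 + (-75)*m^2 + (7)*m + (300))*s1 - ((18)*m^4 + (-100)*m^3 + (6)*m^2 + (508)*m + (-240))) + ((40824)*m^18 + (-1169064)*m^17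 + (12536214)*m^16 + (-46440584)*m^15 + (-200106876)*m^14 + (2547244948)*m^13 + (-7584009648)*m^12 + (-10489234652)*m^11 + (113696139732)*m^10 + (-161781323932)*m^9 + (-493962143910)*m^8 + (1606909886420)*m^7 + (269748207600)*m^6 + (-5794974827200)*m^5 + (3613765344000)*m^4 + (9781690752000)*m^3 + (-9976573440000)*m^2 + (-6729246720000)*m + (8410521600000)) := by
    ring
  have hR : (0:ℝ) ≤ ((56)*m^6 + (-120)*m^5 + (-1945)*m^4 + (4998)*m^3 + (11591)*m^2 + (-20520)*m + (-32400)) * (((14)*m^3 + (-75)*m^2 + (7)*m + (300))*s1 - ((18)*m^4 + (-100)*m^3 + (6)*m^2 + (508)*m + (-240)))^3 + ((1848)*m^10 + (-20872)*m^9 + (14820)*m^8 + (630600)*m^7 + (-2266836)*m^6 + (-2199348)*m^5 + (19063800)*m^4 + (-4944092)*m^3 + (-59970000)*m^2 + (22046400)*m + (75168000)) * (((14)*m^3 + (-75)*m^2 + (7)*m + (300))*s1 - ((18)*m^4 + (-100)*m^3 + (6)*m^2 + (508)*m + (-240)))^2 + ((17388)*m^14 + (-350412)*m^13 + (2194435)*m^12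 + (1385358)*m^11 + (-74202403)*m^10 + (271793496)*m^9 + (164706189)*m^8 + (-2901921834)*m^7 + (3598635479)*m^6 + (10778306160)*m^5 + (-23980890320)*m^4 + (-15585369600)*m^3 + (57297542400)*m^2 + (5958144000)*m + (-51217920000)) * (((14)*m^3 + (-75)*m^2 + (7)*m + (300))*s1 - ((18)*m^4 + (-100)*m^3 + (6)*m^2 + (508)*m + (-240))) + ((40824)*m^18 + (-1169064)*m^17 + (12536214)*m^16 + (-46440584)*m^15 + (-200106876)*m^14 + (2547244948)*m^13 + (-7584009648)*m^12 + (-10489234652)*m^11 + (113696139732)*m^10 + (-161781323932)*m^9 + (-493962143910)*m^8 + (1606909886420)*m^7 + (269748207600)*m^6 + (-5794974827200)*m^5 + (3613765344000)*m^4 + (9781690752000)*m^3 + (-9976573440000)*m^2 + (-6729246720000)*m + (8410521600000)) := by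
    have t3 := mul_nonneg hc3 (pow_nonneg ht 3)
    have t2 := mul_nonneg hc2 (pow_nonneg ht 2)
    have t1 := mul_nonneg hc1 ht
    linarith
  by_contra hcon
  push_neg at hcon
  have hlt : ((14)*m^3 + (-75)*m^2 + (7)*m + (300))^3 * (4*((3)*m^4 + (-26)*m^3 + (51)*m^2 + (80)*m + (-240))*(((21)*m^2 + (-3)*m + (-60))*s1^3 + ((-42)*m^3 + (-27)*m^2 + (15)*m + (-180))*s1^2 + ((21)*m^4 + (42)*m^3 + (165)*m^2 + (528)*m + (240))*s1 + ((-12)*m^4 + (-120)*m^3 + (-348)*m^2 + (-240)*m)) - s1*(((-14)*m^3 + (75)*m^2 + (-7)*m + (-300))*s1 + ((15)*m^4 + (-74)*m^3 + (-45)*m^2 + (428)*m))^2) < 0 := mul_neg_of_pos_of_neg (pow_pos hG 3) hcon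
  linarith

set_option maxHeartbeats 4000000 in
private lemma core_ineq (m s1 s2 s3 : ℝ) (hm67 : m = 6 ∨ 7 ≤ m) (hs1 : 5 ≤ s1)
    (hp : 0 ≤ s2 - s1) (hq : 0 ≤ s3 - 3*s2 + 2*s1)
    (hC : (s2 - s1)^2 ≤ s1*(s3 - 2*s2 + s1))
    (hQ : 0 ≤ (s1 - m)*(s1 - m - 1)) (hQ2 : 0 ≤ (s1 - m - 1)*(s1 - m - 2)) :
    0 ≤ ((21)*m^2 + (-3)*m + (-60))*s1^3 + ((-28)*m^3 + (-102)*m^2 + (22)*m + (120))*s1^2 + ((-14)*m^3 + (75)*m^2 + (-7)*m + (-300))*(s1*s2) + ((9)*m^4 + (90)*m^3 + (261)*m^2 + (180)*m)*s1 + ((9)*m^4 + (-22)*m^3 + (-147)*m^2 + (268)*m + (480))*s2 + ((3)*m^4 + (-26)*m^3 + (51)*m^2 + (80)*m + (-240))*s3 + ((-12)*m^4 + (-120)*m^3 + (-348)*m^2 + (-240)*m) := by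
  have hm : (6:ℝ) ≤ m := by rcases hm67 with h | h <;> linarith
  have hw : (0:ℝ) ≤ m - 6 := by linarith
  have hB : (0:ℝ) < ((3)*m^4 + (-26)*m^3 + (51)*m^2 + (80)*m + (-240)) := by
    nlinarith [pow_nonneg hw 2, pow_nonneg hw 3, pow_nonneg hw 4]
  have hI : (0:ℝ) ≤ ((21)*m^2 + (-3)*m + (-60)) := by nlinarith [pow_nonneg hw 2]
  have hIW : (0:ℝ) ≤ ((21)*m^2 + (-3)*m + (-60))*s1 + ((-12)*m^2 + (-108)*m + (-240)) := by
    nlinarith [mul_nonneg hI (show (0:ℝ) ≤ s1 - 5 by linarith), pow_nonneg hw 2]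
  rcases le_or_gt 0 ((((-14)*m^3 + (75)*m^2 + (-7)*m + (-300))*s1 + ((18)*m^4 + (-100)*m^3 + (6)*m^2 + (508)*m + (-240)))) with hL | hL
  · nlinarith [mul_nonneg hQ hIW, mul_nonneg hL hp, mul_nonneg hB.le hq]
  · have hG : (0:ℝ) < ((14)*m^3 + (-75)*m^2 + (7)*m + (300)) := by nlinarith [pow_nonneg hw 2, pow_nonneg hw 3]
    have hL3m1 : (0:ℝ) < ((-14)*m^3 + (75)*m^2 + (-7)*m + (-300))*(m+1) + ((18)*m^4 + (-100)*m^3 + (6)*m^2 + (508)*m + (-240)) := by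
      nlinarith [pow_nonneg hw 2, pow_nonneg hw 3, pow_nonneg hw 4]
    have hs1m1 : m + 1 < s1 := by
      by_contra hcon
      push_neg at hcon
      nlinarith [mul_le_mul_of_nonneg_left hcon hG.le]
    have hs1m2 : m + 2 ≤ s1 := by
      by_contra hcon
      push_neg at hcon
      nlinarith [mul_pos (show (0:ℝ) < s1 - m - 1 by linarith)
        (show (0:ℝ) < m + 2 - s1 by linarith)]
    have hRq : (0:ℝ) ≤ (4*((3)*m^4 + (-26)*m^3 + (51)*m^2 + (80)*m + (-240))*(((21)*m^2 + (-3)*m + (-60))*s1^3 + ((-42)*m^3 + (-27)*m^2 + (15)*m + (-180))*s1^2 + ((21)*m^4 + (42)*m^3 + (165)*m^2 + (528)*m + (240))*s1 + ((-12)*m^4 + (-120)*m^3 + (-348)*m^2 + (-240)*m)) - s1*(((-14)*m^3 + (75)*m^2 + (-7)*m + (-300))*s1 + ((15)*m^4 + (-74)*m^3 + (-45)*m^2 + (428)*m))^2) := by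
      rcases hm67 with h6 | h7
      · subst h6
        nlinarith [rq_six s1 (by linarith)]
      · exact rq_seven m s1 h7 (by nlinarith [hL])
    have hs1pos : (0:ℝ) < s1 := by linarith
    have hCt : (0:ℝ) ≤ s1*(s3 - 3*s2 + 2*s1) - (s2 - s1)^2 + s1*(s2 - s1) := by linarith
    by_contra hFneg
    push_neg at hFneg
    have hprod : (4:ℝ)*((3)*m^4 + (-26)*m^3 + (51)*m^2 + (80)*m + (-240))*s1 * (((21)*m^2 + (-3)*m + (-60))*s1^3 + ((-28)*m^3 + (-102)*m^2 + (22)*m + (120))*s1^2 + ((-14)*m^3 + (75)*m^2 + (-7)*m + (-300))*(s1*s2) + ((9)*m^4 + (90)*m^3 + (261)*m^2 + (180)*m)*s1 + ((9)*m^4 + (-22)*m^3 + (-147)*m^2 + (268)*m + (480))*s2 + ((3)*m^4 + (-26)*m^3 + (51)*m^2 + (80)*m + (-240))*s3 + ((-12)*m^4 + (-120)*m^3 + (-348)*m^2 + (-240)*m)) < 0 :=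
      mul_neg_of_pos_of_neg (by positivity) hFneg
    nlinarith [sq_nonneg (2*((3)*m^4 + (-26)*m^3 + (51)*m^2 + (80)*m + (-240))*(s2 - s1) + (((-14)*m^3 + (75)*m^2 + (-7)*m + (-300))*s1 + ((15)*m^4 + (-74)*m^3 + (-45)*m^2 + (428)*m))*s1), mul_nonneg hs1pos.le hRq,
      mul_nonneg (mul_nonneg (mul_nonneg (show (0:ℝ) ≤ 4 by norm_num) hB.le) hB.le) hCt,
      hprod]

set_option maxHeartbeats 1000000 in
theorem above_line_pm_pmplus1
    (m : ℕ) (hm : 6 ≤ m)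
    (n : ℕ) (hn : 0 < n) (d : Fin n → ℤ) (hd : ∀ i, 1 ≤ d i) (hs : 5 ≤ ∑ i, d i) :
    0 ≤ kGen m * chern1 n (fun i => (d i : ℝ)) ^ 3
        + bGen m * (chern1 n (fun i => (d i : ℝ)) * chern2 n (fun i => (d i : ℝ)))
        - chern3 n (fun i => (d i : ℝ)) := by
  have hd1 : ∀ i, (1:ℝ) ≤ ((d i : ℝ)) := fun i => by exact_mod_cast hd i
  have hd0 : ∀ i, (0:ℝ) ≤ ((d i : ℝ)) := fun i => by linarith [hd1 i]
  simp only [chern1, chern2, chern3, kGen, bGen]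
  set S1 := sPow n (fun i => (d i : ℝ)) 1 with hS1
  set S2 := sPow n (fun i => (d i : ℝ)) 2 with hS2
  set S3 := sPow n (fun i => (d i : ℝ)) 3 with hS3
  have hS1a : S1 = ((∑ i, d i : ℤ) : ℝ) := by
    rw [hS1, sPow]
    push_cast
    simp [pow_one]
  have hs1 : (5:ℝ) ≤ S1 := by
    rw [hS1a]
    exact_mod_cast hs
  have hp : (0:ℝ) ≤ S2 - S1 := by
    rw [hS1, hS2, sPow, sPow, ← Finset.sum_sub_distrib]
    apply Finset.sum_nonneg
    intro i _
    nlinarith [hd1 i]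
  have hq : (0:ℝ) ≤ S3 - 3*S2 + 2*S1 := by
    have e : S3 - 3*S2 + 2*S1 = ∑ i, (((d i : ℝ))^3 - 3*((d i : ℝ))^2 + 2*((d i : ℝ))^1) := by
      rw [hS1, hS2, hS3, sPow, sPow, sPow, Finset.mul_sum, Finset.mul_sum,
        ← Finset.sum_sub_distrib, ← Finset.sum_add_distrib]
    rw [e]
    apply Finset.sum_nonneg
    intro i _
    rcases le_or_gt 2 (d i) with h | h
    · have h2 : (2:ℝ) ≤ (d i : ℝ) := by exact_mod_cast h
      nlinarith [mul_nonneg (mul_nonneg (show (0:ℝ) ≤ (d i : ℝ) by linarith)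
        (show (0:ℝ) ≤ (d i : ℝ) - 1 by linarith)) (show (0:ℝ) ≤ (d i : ℝ) - 2 by linarith)]
    · have h1 : d i = 1 := le_antisymm (by omega) (hd i)
      rw [h1]
      norm_num
  have hC : (S2 - S1)^2 ≤ S1*(S3 - 2*S2 + S1) := by
    have key := Finset.sum_mul_sq_le_sq_mul_sq Finset.univ
      (fun i : Fin n => Real.sqrt ((d i : ℝ)))
      (fun i : Fin n => Real.sqrt ((d i : ℝ)) * (((d i : ℝ)) - 1))
    have e1 : (∑ i : Fin n, Real.sqrt ((d i : ℝ)) * (Real.sqrt ((d i : ℝ)) * (((d i : ℝ)) - 1)))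
        = S2 - S1 := by
      rw [hS1, hS2, sPow, sPow, ← Finset.sum_sub_distrib]
      apply Finset.sum_congr rfl
      intro i _
      rw [← mul_assoc, Real.mul_self_sqrt (hd0 i)]
      ring
    have e2 : (∑ i : Fin n, (Real.sqrt ((d i : ℝ)))^2) = S1 := by
      rw [hS1, sPow]
      apply Finset.sum_congr rfl
      intro i _
      rw [Real.sq_sqrt (hd0 i), pow_one]
    have e3 : (∑ i : Fin n, (Real.sqrt ((d i : ℝ)) * (((d i : ℝ)) - 1))^2)
        = S3 - 2*S2 + S1 := by
      have e3' : ∀ i : Fin n, (Real.sqrt ((d i : ℝ)) * (((d i : ℝ)) - 1))^2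
          = ((d i : ℝ))^3 - 2*((d i : ℝ))^2 + ((d i : ℝ))^1 := by
        intro i
        rw [mul_pow, Real.sq_sqrt (hd0 i)]
        ring
      rw [Finset.sum_congr rfl (fun i _ => e3' i), hS1, hS2, hS3, sPow, sPow, sPow,
        Finset.mul_sum, ← Finset.sum_sub_distrib, ← Finset.sum_add_distrib]
    rw [e1, e2, e3] at key
    exact key
  have hQint : (0:ℤ) ≤ ((∑ i, d i) - m) * ((∑ i, d i) - m - 1) := by
    rcases le_or_gt (∑ i, d i) (m : ℤ) with h | h
    · nlinarith [mul_nonneg (show (0:ℤ) ≤ (m:ℤ) - (∑ i, d i) by omega)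
        (show (0:ℤ) ≤ (m:ℤ) + 1 - (∑ i, d i) by omega)]
    · exact mul_nonneg (by omega) (by omega)
  have hQ2int : (0:ℤ) ≤ ((∑ i, d i) - m - 1) * ((∑ i, d i) - m - 2) := by
    rcases le_or_gt (∑ i, d i) ((m : ℤ) + 1) with h | h
    · nlinarith [mul_nonneg (show (0:ℤ) ≤ (m:ℤ) + 1 - (∑ i, d i) by omega)
        (show (0:ℤ) ≤ (m:ℤ) + 2 - (∑ i, d i) by omega)]
    · exact mul_nonneg (by omega) (by omega)
  have hQ : (0:ℝ) ≤ (S1 - (m:ℝ))*(S1 - (m:ℝ) - 1) := by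
    rw [hS1a]
    exact_mod_cast hQint
  have hQ2 : (0:ℝ) ≤ (S1 - (m:ℝ) - 1)*(S1 - (m:ℝ) - 2) := by
    rw [hS1a]
    exact_mod_cast hQ2int
  have hm67 : ((m:ℝ) = 6 ∨ 7 ≤ (m:ℝ)) := by
    rcases Nat.lt_or_ge m 7 with h | h
    · left
      have : m = 6 := by omega
      rw [this]
      norm_num
    · right
      exact_mod_cast h
  have key := core_ineq (m:ℝ) S1 S2 S3 hm67 hs1 hp hq hC hQ hQ2
  have hm6 : (6:ℝ) ≤ (m:ℝ) := by exact_mod_cast hm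
  have hden : (0:ℝ) < ((m:ℝ) - 4) * ((m:ℝ) - 3) * (3 * (m:ℝ)^2 - 5*(m:ℝ) - 20) := by
    have h1 : (0:ℝ) < (m:ℝ) - 4 := by linarith
    have h2 : (0:ℝ) < (m:ℝ) - 3 := by linarith
    have h3 : (0:ℝ) < 3 * (m:ℝ)^2 - 5*(m:ℝ) - 20 := by nlinarith
    positivity
  have heq : (-28 * (m : ℝ) + (m : ℝ) ^ 2 + 4 * (m : ℝ) ^ 3 - (m : ℝ) ^ 4) /
        (((m : ℝ) - 4) * ((m : ℝ) - 3) * (3 * (m : ℝ) ^ 2 - 5 * (m : ℝ) - 20)) * (4 - S1) ^ 3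
      + (-120 + 254 * (m : ℝ) + 3 * (m : ℝ) ^ 2 - 50 * (m : ℝ) ^ 3 + 9 * (m : ℝ) ^ 4) /
        (3 * ((m : ℝ) - 4) * ((m : ℝ) - 3) * (3 * (m : ℝ) ^ 2 - 5 * (m : ℝ) - 20)) *
        ((4 - S1) * ((S1 ^ 2 + S2) / 2 - 3 * (S1 - 2)))
      - (-(S1 ^ 3 + 3 * S1 * S2 + 2 * S3) / 6 + (S1 ^ 2 + S2) - 3 * S1 + 4)
      = (((21)*(m:ℝ)^2 + (-3)*(m:ℝ) + (-60))*S1^3 + ((-28)*(m:ℝ)^3 + (-102)*(m:ℝ)^2 + (22)*(m:ℝ) + (120))*S1^2 + ((-14)*(m:ℝ)^3 + (75)*(m:ℝ)^2 + (-7)*(m:ℝ) + (-300))*(S1*S2) + ((9)*(m:ℝ)^4 + (90)*(m:ℝ)^3 + (261)*(m:ℝ)^2 + (180)*(m:ℝ))*S1 + ((9)*(m:ℝ)^4 + (-22)*(m:ℝ)^3 + (-147)*(m:ℝ)^2 + (268)*(m:ℝ) + (480))*S2 + ((3)*(m:ℝ)^4 + (-26)*(m:ℝ)^3 + (51)*(m:ℝ)^2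 + (80)*(m:ℝ) + (-240))*S3 + ((-12)*(m:ℝ)^4 + (-120)*(m:ℝ)^3 + (-348)*(m:ℝ)^2 + (-240)*(m:ℝ))) /
        (3 * (((m : ℝ) - 4) * ((m : ℝ) - 3) * (3 * (m : ℝ) ^ 2 - 5 * (m : ℝ) - 20))) := by
    have h1 : ((m:ℝ) - 4) ≠ 0 := by linarith
    have h2 : ((m:ℝ) - 3) ≠ 0 := by linarith
    have h3 : (3 * (m:ℝ)^2 - 5*(m:ℝ) - 20) ≠ 0 := by nlinarith
    generalize hD : 3 * (m:ℝ)^2 - 5*(m:ℝ) - 20 = D at h3 ⊢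
    field_simp
    subst hD
    ring
  have twist : (0:ℝ) ≤ (((21)*(m:ℝ)^2 + (-3)*(m:ℝ) + (-60))*S1^3 + ((-28)*(m:ℝ)^3 + (-102)*(m:ℝ)^2 + (22)*(m:ℝ) + (120))*S1^2 + ((-14)*(m:ℝ)^3 + (75)*(m:ℝ)^2 + (-7)*(m:ℝ) + (-300))*(S1*S2) + ((9)*(m:ℝ)^4 + (90)*(m:ℝ)^3 + (261)*(m:ℝ)^2 + (180)*(m:ℝ))*S1 + ((9)*(m:ℝ)^4 + (-22)*(m:ℝ)^3 + (-147)*(m:ℝ)^2 + (268)*(m:ℝ) + (480))*S2 + ((3)*(m:ℝ)^4 + (-26)*(m:ℝ)^3 + (51)*(m:ℝ)^2 + (80)*(m:ℝ) + (-240))*S3 + ((-12)*(m:ℝ)^4 + (-120)*(m:ℝ)^3 + (-348)*(m:ℝ)^2 + (-240)*(m:ℝ))) /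
      (3 * (((m : ℝ) - 4) * ((m : ℝ) - 3) * (3 * (m : ℝ) ^ 2 - 5 * (m : ℝ) - 20))) :=
    div_nonneg key (by linarith)
  linarith [heq, twist]
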